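/- For every ε > 0 and any two real intervals I and J, there exists a continuous surjection h : I → J that is ε-crooked: for all t₁ < t₂ in I there exist t₁ < t₂' < t₁' < t₂ with |h(tᵢ') − h(tᵢ)| ≤ ε for i = 1, 2. -/

import Mathlib

open Filter


/-- weak crookedness -/
def IsW (f : ℝ → ℝ) (a b ε : ℝ) : Prop :=
  ∀ t₁ t₂ : ℝ, t₁ ∈ Set.Icc a b → t₂ ∈ Set.Icc a b → t₁ < t₂ →
    ∃ s₂ s₁ : ℝ, t₁ ≤ s₂ ∧ s₂ ≤ s₁ ∧ s₁ ≤ t₂ ∧ |f s₁ - f t₁| ≤ ε ∧ |f s₂ - f t₂| ≤ ε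

lemma isW_congr {f g : ℝ → ℝ} {a b ε : ℝ} (h : ∀ t ∈ Set.Icc a b, f t = g t)
    (hf : IsW f a b ε) : IsW g a b ε := by
  intro t₁ t₂ h₁ h₂ hlt
  obtain ⟨s₂, s₁, hs₁, hs₂, hs₃, e₁, e₂⟩ := hf t₁ t₂ h₁ h₂ hlt
  have m2 : s₂ ∈ Set.Icc a b := ⟨h₁.1.trans hs₁, (hs₂.trans hs₃).trans h₂.2⟩
  have m1 : s₁ ∈ Set.Icc a b := ⟨h₁.1.trans (hs₁.trans hs₂), hs₃.trans h₂.2⟩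
  exact ⟨s₂, s₁, hs₁, hs₂, hs₃, by rw [← h _ m1, ← h _ h₁]; exact e₁,
    by rw [← h _ m2, ← h _ h₂]; exact e₂⟩

lemma isW_neg {f : ℝ → ℝ} {a b ε : ℝ} (hf : IsW f a b ε) :
    IsW (fun t => -f t) a b ε := by
  intro t₁ t₂ h₁ h₂ hlt
  obtain ⟨s₂, s₁, hs₁, hs₂, hs₃, e₁, e₂⟩ := hf t₁ t₂ h₁ h₂ hlt
  refine ⟨s₂, s₁, hs₁, hs₂, hs₃, ?_, ?_⟩
  · show |(-(f s₁)) - (-(f t₁))| ≤ ε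
    rw [show -(f s₁) - -(f t₁) = -(f s₁ - f t₁) by ring, abs_neg]; exact e₁
  · show |(-(f s₂)) - (-(f t₂))| ≤ ε
    rw [show -(f s₂) - -(f t₂) = -(f s₂ - f t₂) by ring, abs_neg]; exact e₂

lemma isW_reflect {f : ℝ → ℝ} {a b ε : ℝ} (hf : IsW f a b ε) :
    IsW (fun t => f (a + b - t)) a b ε := by
  intro t₁ t₂ h₁ h₂ hlt
  have h₁' : a + b - t₂ ∈ Set.Icc a b := by
    constructor <;> [linarith [h₂.2]; linarith [h₂.1]]
  have h₂' : a + b - t₁ ∈ Set.Icc a b := by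
    constructor <;> [linarith [h₁.2]; linarith [h₁.1]]
  obtain ⟨s₂, s₁, hs₁, hs₂, hs₃, e₁, e₂⟩ := hf (a + b - t₂) (a + b - t₁) h₁' h₂' (by linarith)
  refine ⟨a + b - s₁, a + b - s₂, by linarith, by linarith, by linarith, ?_, ?_⟩
  · simpa using e₂
  · simpa using e₁

/-- linear base case: `d - c ≤ 2 ε`. -/
lemma linear_case {ε a b c d : ℝ} (hε : 0 < ε) (hab : a < b) (hcd : c < d)
    (h2 : d - c ≤ 2 * ε) :
    ∃ h : ℝ → ℝ, Continuous h ∧ h '' Set.Icc a b = Set.Icc c d ∧ h a = c ∧ h b = d ∧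
      IsW h a b ε := by
  set k := (d - c) / (b - a) with hk
  have hba : 0 < b - a := by linarith
  have hk0 : 0 < k := div_pos (by linarith) hba
  have hkb : k * (b - a) = d - c := by rw [hk, div_mul_cancel₀ _ hba.ne']
  refine ⟨fun t => c + k * (t - a), by continuity, ?_, by simp, ?_, ?_⟩
  · apply Set.Subset.antisymm
    · rintro y ⟨x, hx, rfl⟩
      have h1 : 0 ≤ k * (x - a) := mul_nonneg hk0.le (by linarith [hx.1])
      have h2 : k * (x - a) ≤ k * (b - a) :=
        mul_le_mul_of_nonneg_left (by linarith [hx.2]) hk0.le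
      exact ⟨by simpa using h1.trans_eq' (by ring), by simp; linarith⟩
    · intro y hy
      have hk' : k ≠ 0 := hk0.ne'
      refine ⟨a + (y - c) / k, ⟨by linarith [div_nonneg (by linarith [hy.1] : (0:ℝ) ≤ y - c) hk0.le], ?_⟩, ?_⟩
      · have h1 : (y - c) / k ≤ (d - c) / k := by
          gcongr
          exact hy.2
        have h2 : (d - c) / k = b - a := by
          rw [eq_comm, eq_div_iff hk', mul_comm]
          exact hkb
        linarith
      · show c + k * (a + (y - c) / k - a) = y
        field_simp
        ring
  · simp only []
    rw [hk]; field_simp; ring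
  · intro t₁ t₂ h₁ h₂ hlt
    have ht : t₂ - t₁ ≤ b - a := by linarith [h₁.1, h₂.2]
    have key : k * ((t₂ - t₁) / 2) ≤ ε := by
      have : k * ((t₂ - t₁) / 2) ≤ k * ((b - a) / 2) :=
        mul_le_mul_of_nonneg_left (by linarith) hk0.le
      nlinarith
    have hnn : 0 ≤ k * ((t₂ - t₁) / 2) := mul_nonneg hk0.le (by linarith)
    refine ⟨(t₁ + t₂) / 2, (t₁ + t₂) / 2, by linarith, le_refl _, by linarith, ?_, ?_⟩
    · show |c + k * ((t₁ + t₂) / 2 - a) - (c + k * (t₁ - a))| ≤ ε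
      rw [show c + k * ((t₁ + t₂) / 2 - a) - (c + k * (t₁ - a)) = k * ((t₂ - t₁) / 2) by ring,
        abs_of_nonneg hnn]
      exact key
    · show |c + k * ((t₁ + t₂) / 2 - a) - (c + k * (t₂ - a))| ≤ ε
      rw [show c + k * ((t₁ + t₂) / 2 - a) - (c + k * (t₂ - a)) = -(k * ((t₂ - t₁) / 2)) by ring,
        abs_neg, abs_of_nonneg hnn]
      exact key

/-- junction lemma, max version: crossing pairs at a maximum point. -/
lemma junction_max {f : ℝ → ℝ} (hf : Continuous f) {l m r ε : ℝ}
    (hW1 : IsW f l m ε) (hW2 : IsW f m r ε)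
    (hmax : ∀ t ∈ Set.Icc l r, f t ≤ f m) (hε : 0 ≤ ε) :
    ∀ t₁ ∈ Set.Icc l m, ∀ t₂ ∈ Set.Icc m r, t₁ < t₂ →
      ∃ s₂ s₁ : ℝ, t₁ ≤ s₂ ∧ s₂ ≤ s₁ ∧ s₁ ≤ t₂ ∧ |f s₁ - f t₁| ≤ ε ∧ |f s₂ - f t₂| ≤ ε := by
  intro t₁ ht₁ t₂ ht₂ hlt
  have hlm : l ≤ m := ht₁.1.trans ht₁.2
  have hmr : m ≤ r := ht₂.1.trans ht₂.2
  rcases eq_or_lt_of_le ht₁.2 with h1m | h1m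
  · exact hW2 t₁ t₂ (by rw [h1m]; exact ⟨le_refl _, hmr⟩) ht₂ hlt
  rcases eq_or_lt_of_le ht₂.1 with h2m | h2m
  · exact hW1 t₁ t₂ ht₁ (by rw [← h2m]; exact ⟨hlm, le_refl _⟩) hlt
  have hft₁ : f t₁ ≤ f m := hmax t₁ ⟨ht₁.1, ht₁.2.trans hmr⟩
  have hft₂ : f t₂ ≤ f m := hmax t₂ ⟨hlm.trans ht₂.1, ht₂.2⟩
  rcases le_total (f t₁) (f t₂) with hc | hc
  · -- use left crookedness on (t₁, m)
    obtain ⟨u, v, hu, huv, hvm, ev, eu⟩ := hW1 t₁ m ht₁ ⟨hlm, le_refl _⟩ h1m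
    have hfu : f m - ε ≤ f u := by
      have := abs_le.mp eu; linarith [this.1]
    rcases le_total (f t₂) (f u) with hcu | hcu
    · -- IVT on [t₁, u]
      have : f t₂ ∈ Set.Icc (f t₁) (f u) := ⟨hc, hcu⟩
      obtain ⟨s₂, hs₂, hfs₂⟩ := intermediate_value_Icc hu hf.continuousOn this
      exact ⟨s₂, v, hs₂.1, hs₂.2.trans huv, hvm.trans h2m.le, ev,
        by rw [hfs₂]; simpa using hε⟩
    · exact ⟨u, v, hu, huv, hvm.trans h2m.le, ev, by
        rw [abs_le]; constructor <;> linarith⟩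
  · -- use right crookedness on (m, t₂)
    obtain ⟨u, v, hu, huv, hvt, ev, eu⟩ := hW2 m t₂ ⟨le_refl _, hmr⟩ ht₂ h2m
    have hfv : f m - ε ≤ f v := by
      have := abs_le.mp ev; linarith [this.1]
    rcases le_total (f t₁) (f v) with hcv | hcv
    · -- IVT on [v, t₂] (decreasing direction)
      have : f t₁ ∈ Set.Icc (f t₂) (f v) := ⟨hc, hcv⟩
      obtain ⟨s₁, hs₁, hfs₁⟩ := intermediate_value_Icc' hvt hf.continuousOn this
      exact ⟨u, s₁, h1m.le.trans hu, huv.trans hs₁.1, hs₁.2,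
        by rw [hfs₁]; simpa using hε, eu⟩
    · exact ⟨u, v, h1m.le.trans hu, huv, hvt, by
        rw [abs_le]; constructor <;> linarith, eu⟩

/-- junction lemma, min version. -/
lemma junction_min {f : ℝ → ℝ} (hf : Continuous f) {l m r ε : ℝ}
    (hW1 : IsW f l m ε) (hW2 : IsW f m r ε)
    (hmin : ∀ t ∈ Set.Icc l r, f m ≤ f t) (hε : 0 ≤ ε) :
    ∀ t₁ ∈ Set.Icc l m, ∀ t₂ ∈ Set.Icc m r, t₁ < t₂ →
      ∃ s₂ s₁ : ℝ, t₁ ≤ s₂ ∧ s₂ ≤ s₁ ∧ s₁ ≤ t₂ ∧ |f s₁ - f t₁| ≤ ε ∧ |f s₂ - f t₂| ≤ ε := by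
  intro t₁ ht₁ t₂ ht₂ hlt
  obtain ⟨s₂, s₁, h1, h2, h3, e1, e2⟩ :=
    junction_max (f := fun t => -f t) (hf.neg) (isW_neg hW1) (isW_neg hW2)
      (fun t ht => neg_le_neg (hmin t ht)) hε t₁ ht₁ t₂ ht₂ hlt
  refine ⟨s₂, s₁, h1, h2, h3, ?_, ?_⟩
  · rw [show f s₁ - f t₁ = -((-(f s₁)) - (-(f t₁))) by ring, abs_neg]; exact e1
  · rw [show f s₂ - f t₂ = -((-(f s₂)) - (-(f t₂))) by ring, abs_neg]; exact e2

/-- main induction: if `d - c ≤ n ε`, there is a continuous map with controlled endpoints,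
image `[c,d]`, and weakly `ε`-crooked. -/
lemma crookedS : ∀ n : ℕ, ∀ ε a b c d : ℝ, 0 < ε → a < b → c < d → d - c ≤ n * ε →
    ∃ h : ℝ → ℝ, Continuous h ∧ h '' Set.Icc a b = Set.Icc c d ∧ h a = c ∧ h b = d ∧
      IsW h a b ε := by
  intro n
  induction n with
  | zero =>
    intro ε a b c d hε hab hcd hw
    simp at hw; linarith
  | succ n ih =>
    intro ε a b c d hε hab hcd hw
    push_cast at hw
    by_cases h2e : d - c ≤ 2 * ε
    · exact linear_case hε hab hcd h2e
    push_neg at h2e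
    have hn0 : (0:ℝ) ≤ (n:ℝ) * ε := by positivity
    set p := a + (b - a) / 3 with hp
    set q := a + 2 * (b - a) / 3 with hq
    have hap : a < p := by rw [hp]; linarith
    have hpq : p < q := by rw [hp, hq]; linarith
    have hqb : q < b := by rw [hq]; linarith
    obtain ⟨h₁, h₁c, h₁img, h₁a, h₁p, h₁W⟩ :=
      ih ε a p c (d - ε) hε hap (by linarith) (by linarith)
    obtain ⟨g, gc, gimg, gp, gq, gW⟩ :=
      ih ε p q (c + ε) (d - ε) hε hpq (by linarith) (by linarith)
    obtain ⟨h₃, h₃c, h₃img, h₃q, h₃b, h₃W⟩ :=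
      ih ε q b (c + ε) d hε hqb (by linarith) (by linarith)
    set h₂ : ℝ → ℝ := fun t => g (p + q - t) with hh₂
    have h₂c : Continuous h₂ := gc.comp (by continuity)
    have h₂img : h₂ '' Set.Icc p q = Set.Icc (c + ε) (d - ε) := by
      rw [hh₂]
      have : (fun t => g (p + q - t)) = g ∘ (fun t => p + q - t) := rfl
      rw [this, Set.image_comp]
      have : (fun t => p + q - t) '' Set.Icc p q = Set.Icc p q := by
        rw [Set.image_const_sub_Icc]
        congr 1 <;> ring
      rw [this, gimg]
    have h₂p : h₂ p = d - ε := by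
      rw [hh₂]; show g (p + q - p) = d - ε
      rw [show p + q - p = q by ring, gq]
    have h₂q : h₂ q = c + ε := by
      rw [hh₂]; show g (p + q - q) = c + ε
      rw [show p + q - q = p by ring, gp]
    have h₂W : IsW h₂ p q ε := isW_reflect gW
    -- glue
    set f : ℝ → ℝ := fun t => if t ≤ p then h₁ t else if t ≤ q then h₂ t else h₃ t with hfd
    have f1 : ∀ t, t ≤ p → f t = h₁ t := by
      intro t ht; rw [hfd]; simp only [if_pos ht]
    have f2 : ∀ t, p ≤ t → t ≤ q → f t = h₂ t := by
      intro t ht ht'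
      rw [hfd]
      by_cases htp : t ≤ p
      · have : t = p := le_antisymm htp ht
        subst this
        simp only [if_pos htp]
        rw [h₁p, h₂p]
      · simp only [if_neg htp, if_pos ht']
    have f3 : ∀ t, q ≤ t → f t = h₃ t := by
      intro t ht
      rw [hfd]
      have htp : ¬ t ≤ p := by intro h; linarith
      by_cases htq : t ≤ q
      · have : t = q := le_antisymm htq ht
        subst this
        simp only [if_neg htp, if_pos htq]
        rw [h₂q, h₃q]
      · simp only [if_neg htp, if_neg htq]
    have fc : Continuous f := by
      rw [hfd]
      apply Continuous.if_le h₁c (Continuous.if_le h₂c h₃c continuous_id continuous_const ?_)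
        continuous_id continuous_const ?_
      · intro x hx
        have : (x:ℝ) = q := hx
        rw [this, h₂q, h₃q]
      · intro x hx
        have hxp : (x:ℝ) = p := hx
        rw [hxp]
        simp only [id_eq, if_pos hpq.le, h₁p, h₂p]
    have mem₁ : ∀ t ∈ Set.Icc a p, h₁ t ∈ Set.Icc c (d - ε) := by
      intro t ht; rw [← h₁img]; exact Set.mem_image_of_mem _ ht
    have mem₂ : ∀ t ∈ Set.Icc p q, h₂ t ∈ Set.Icc (c + ε) (d - ε) := by
      intro t ht; rw [← h₂img]; exact Set.mem_image_of_mem _ ht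
    have mem₃ : ∀ t ∈ Set.Icc q b, h₃ t ∈ Set.Icc (c + ε) d := by
      intro t ht; rw [← h₃img]; exact Set.mem_image_of_mem _ ht
    have fimg : f '' Set.Icc a b = Set.Icc c d := by
      have hsplit : Set.Icc a b = Set.Icc a p ∪ (Set.Icc p q ∪ Set.Icc q b) := by
        rw [Set.Icc_union_Icc_eq_Icc hpq.le hqb.le,
          Set.Icc_union_Icc_eq_Icc hap.le (by linarith : p ≤ b)]
      rw [hsplit, Set.image_union, Set.image_union]
      rw [Set.image_congr (fun t ht => f1 t ht.2),
        Set.image_congr (fun t (ht : t ∈ Set.Icc p q) => f2 t ht.1 ht.2),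
        Set.image_congr (fun t (ht : t ∈ Set.Icc q b) => f3 t ht.1),
        h₁img, h₂img, h₃img]
      ext x
      simp only [Set.mem_union, Set.mem_Icc]
      constructor
      · rintro (h | h | h) <;> constructor <;> linarith [h.1, h.2]
      · rintro ⟨hx1, hx2⟩
        by_cases hxc : x ≤ d - ε
        · exact Or.inl ⟨hx1, hxc⟩
        · exact Or.inr (Or.inr ⟨by linarith, hx2⟩)
    have W1 : IsW f a p ε := isW_congr (fun t ht => (f1 t ht.2).symm) h₁W
    have W2 : IsW f p q ε := isW_congr (fun t ht => (f2 t ht.1 ht.2).symm) h₂W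
    have W3 : IsW f q b ε := isW_congr (fun t ht => (f3 t ht.1).symm) h₃W
    refine ⟨f, fc, fimg, ?_, ?_, ?_⟩
    · rw [f1 a hap.le]; exact h₁a
    · rw [f3 b hqb.le]; exact h₃b
    intro t₁ t₂ ht₁ ht₂ hlt
    by_cases c1 : t₂ ≤ p
    · exact W1 t₁ t₂ ⟨ht₁.1, hlt.le.trans c1⟩ ⟨ht₂.1, c1⟩ hlt
    push_neg at c1
    by_cases c2 : q ≤ t₁
    · exact W3 t₁ t₂ ⟨c2, ht₁.2⟩ ⟨c2.trans hlt.le, ht₂.2⟩ hlt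
    push_neg at c2
    have hfp : f p = d - ε := by rw [f2 p (le_refl p) hpq.le]; exact h₂p
    have hfq : f q = c + ε := by rw [f2 q hpq.le (le_refl q)]; exact h₂q
    by_cases c3 : p ≤ t₁
    · by_cases c4 : t₂ ≤ q
      · exact W2 t₁ t₂ ⟨c3, c2.le⟩ ⟨c1.le, c4⟩ hlt
      · push_neg at c4
        apply junction_min fc W2 W3 ?_ hε.le t₁ ⟨c3, c2.le⟩ t₂ ⟨c4.le, ht₂.2⟩ hlt
        intro t ht
        rw [hfq]
        rcases le_total t q with htq | htq
        · rw [f2 t ht.1 htq]; exact (mem₂ t ⟨ht.1, htq⟩).1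
        · rw [f3 t htq]; exact (mem₃ t ⟨htq, ht.2⟩).1
    push_neg at c3
    by_cases c4 : t₂ ≤ q
    · apply junction_max fc W1 W2 ?_ hε.le t₁ ⟨ht₁.1, c3.le⟩ t₂ ⟨c1.le, c4⟩ hlt
      intro t ht
      rw [hfp]
      rcases le_total t p with htp | htp
      · rw [f1 t htp]; exact (mem₁ t ⟨ht.1, htp⟩).2
      · rw [f2 t htp ht.2]; exact (mem₂ t ⟨htp, ht.2⟩).2
    push_neg at c4
    -- case 6 : t₁ < p, q < t₂
    obtain ⟨u₀, hu₀, hu₀v⟩ : ∃ u₀ ∈ Set.Icc p q, f u₀ = c + ε := by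
      have : c + ε ∈ Set.Icc (c + ε) (d - ε) := ⟨le_refl _, by linarith⟩
      rw [← h₂img] at this
      obtain ⟨u₀, hu₀, hval⟩ := this
      exact ⟨u₀, hu₀, by rw [f2 u₀ hu₀.1 hu₀.2]; exact hval⟩
    have hpu₀ : p < u₀ := by
      rcases eq_or_lt_of_le hu₀.1 with he | h
      · exfalso; rw [← he] at hu₀v; rw [hfp] at hu₀v; linarith
      · exact h
    obtain ⟨u', v', hpu', hu'v', hv'u₀, ev', eu'⟩ :=
      W2 p u₀ ⟨le_refl _, hpq.le⟩ hu₀ hpu₀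
    rw [hfp] at ev'
    rw [hu₀v] at eu'
    have hv'lb : d - 2 * ε ≤ f v' := by have := (abs_le.mp ev').1; linarith
    have hu'ub : f u' ≤ c + 2 * ε := by have := (abs_le.mp eu').2; linarith
    have hft₂ : f t₂ ∈ Set.Icc (c + ε) d := by
      rw [f3 t₂ c4.le]; exact mem₃ t₂ ⟨c4.le, ht₂.2⟩
    have hft₁ : f t₁ ∈ Set.Icc c (d - ε) := by
      rw [f1 t₁ c3.le]; exact mem₁ t₁ ⟨ht₁.1, c3.le⟩
    obtain ⟨s₂, hs₂mem, hs₂e⟩ : ∃ s ∈ Set.Icc p u', |f s - f t₂| ≤ ε := by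
      rcases le_total (d - ε) (f t₂) with hc' | hc'
      · exact ⟨p, ⟨le_refl _, hpu'⟩, by rw [hfp, abs_le]; constructor <;> linarith [hft₂.2]⟩
      rcases le_total (f t₂) (f u') with hc'' | hc''
      · exact ⟨u', ⟨hpu', le_refl _⟩, by rw [abs_le]; constructor <;> linarith [hft₂.1]⟩
      · have : f t₂ ∈ Set.Icc (f u') (f p) := ⟨hc'', by rw [hfp]; exact hc'⟩
        obtain ⟨s, hs, hval⟩ := intermediate_value_Icc' hpu' fc.continuousOn this
        exact ⟨s, hs, by rw [hval]; simpa using hε.le⟩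
    obtain ⟨s₁, hs₁mem, hs₁e⟩ : ∃ s ∈ Set.Icc v' u₀, |f s - f t₁| ≤ ε := by
      rcases le_total (f t₁) (c + ε) with hc' | hc'
      · exact ⟨u₀, ⟨hv'u₀, le_refl _⟩, by rw [hu₀v, abs_le]; constructor <;> linarith [hft₁.1]⟩
      rcases le_total (f v') (f t₁) with hc'' | hc''
      · exact ⟨v', ⟨le_refl _, hv'u₀⟩, by rw [abs_le]; constructor <;> linarith [hft₁.2]⟩
      · have : f t₁ ∈ Set.Icc (f u₀) (f v') := ⟨by rw [hu₀v]; exact hc', hc''⟩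
        obtain ⟨s, hs, hval⟩ := intermediate_value_Icc' hv'u₀ fc.continuousOn this
        exact ⟨s, hs, by rw [hval]; simpa using hε.le⟩
    exact ⟨s₂, s₁, c3.le.trans hs₂mem.1, hs₂mem.2.trans (hu'v'.trans hs₁mem.1),
      hs₁mem.2.trans (hu₀.2.trans c4.le), hs₁e, hs₂e⟩

/-- for every `ε > 0` and nondegenerate compact intervals `I = [a,b]`,
`J = [c,d]`, there is a continuous surjection `h : I → J` which is `ε`-crooked. -/
theorem exists_crooked_surjection (ε : ℝ) (hε : 0 < ε) (a b c d : ℝ) (hab : a < b)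
    (hcd : c < d) :
    ∃ h : ℝ → ℝ, ContinuousOn h (Set.Icc a b) ∧ h '' Set.Icc a b = Set.Icc c d ∧
      ∀ t₁ t₂ : ℝ, t₁ ∈ Set.Icc a b → t₂ ∈ Set.Icc a b → t₁ < t₂ →
        ∃ t₂' t₁' : ℝ, t₁ < t₂' ∧ t₂' < t₁' ∧ t₁' < t₂ ∧
          |h t₁' - h t₁| ≤ ε ∧ |h t₂' - h t₂| ≤ ε := by
  have hε4 : 0 < ε / 4 := by linarith
  obtain ⟨n, hn⟩ := exists_nat_ge ((d - c) / (ε / 4))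
  have hw : d - c ≤ n * (ε / 4) := by
    rw [div_le_iff₀ hε4] at hn; linarith
  obtain ⟨h, hc, himg, -, -, hW⟩ := crookedS n (ε / 4) a b c d hε4 hab hcd hw
  refine ⟨h, hc.continuousOn, himg, ?_⟩
  intro t₁ t₂ ht₁ ht₂ hlt
  obtain ⟨δ₁, hδ₁, hd₁⟩ := Metric.continuous_iff.mp hc t₁ (ε / 4) hε4
  obtain ⟨δ₂, hδ₂, hd₂⟩ := Metric.continuous_iff.mp hc t₂ (ε / 4) hε4
  set η := min (min δ₁ δ₂) ((t₂ - t₁) / 2) / 2 with hη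
  have hη0 : 0 < η := by
    apply div_pos _ (by norm_num)
    apply lt_min (lt_min hδ₁ hδ₂) (by linarith)
  have hm1 := min_le_left δ₁ δ₂
  have hm2 := min_le_right δ₁ δ₂
  have hm3 := min_le_left (min δ₁ δ₂) ((t₂ - t₁) / 2)
  have hm4 := min_le_right (min δ₁ δ₂) ((t₂ - t₁) / 2)
  have hηδ₁ : η < δ₁ := by rw [hη]; linarith
  have hηδ₂ : η < δ₂ := by rw [hη]; linarith
  have hηt : η < (t₂ - t₁) / 2 := by rw [hη]; linarith
  set u₁ := t₁ + η with hu₁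
  set u₂ := t₂ - η with hu₂
  have hu₁₂ : u₁ < u₂ := by rw [hu₁, hu₂]; linarith
  have hu₁m : u₁ ∈ Set.Icc a b := ⟨by linarith [ht₁.1], by linarith [ht₂.2]⟩
  have hu₂m : u₂ ∈ Set.Icc a b := ⟨by linarith [ht₁.1], by linarith [ht₂.2]⟩
  have e₁ : |h u₁ - h t₁| ≤ ε / 4 := by
    have := hd₁ u₁ (by rw [Real.dist_eq, hu₁]; rw [show t₁ + η - t₁ = η by ring, abs_of_pos hη0]; exact hηδ₁)
    rw [Real.dist_eq] at this; linarith
  have e₂ : |h u₂ - h t₂| ≤ ε / 4 := by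
    have := hd₂ u₂ (by rw [Real.dist_eq, hu₂]; rw [show t₂ - η - t₂ = -η by ring, abs_neg, abs_of_pos hη0]; exact hηδ₂)
    rw [Real.dist_eq] at this; linarith
  obtain ⟨m₂, m₁, hm₂, hm₂₁, hm₁, em₁, em₂⟩ := hW u₁ u₂ hu₁m hu₂m hu₁₂
  have E₁ : |h m₁ - h t₁| ≤ ε / 2 := by
    have h1 := abs_le.mp em₁
    have h2 := abs_le.mp e₁
    rw [abs_le]; constructor <;> linarith
  have E₂ : |h m₂ - h t₂| ≤ ε / 2 := by
    have h1 := abs_le.mp em₂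
    have h2 := abs_le.mp e₂
    rw [abs_le]; constructor <;> linarith
  have ht₁u₁ : t₁ < u₁ := by rw [hu₁]; linarith
  have hu₂t₂ : u₂ < t₂ := by rw [hu₂]; linarith
  rcases eq_or_lt_of_le hm₂₁ with heq | hm₂₁'
  · -- m₂ = m₁ =: m; perturb around it
    subst heq
    set m := m₂
    have hmt₁ : t₁ < m := lt_of_lt_of_le ht₁u₁ hm₂
    have hmt₂ : m < t₂ := lt_of_le_of_lt hm₁ hu₂t₂
    obtain ⟨ζ, hζ0, hdζ⟩ := Metric.continuous_iff.mp hc m (ε / 2) (by linarith)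
    set e := min ζ (min (m - t₁) (t₂ - m)) with he
    have he1 := min_le_left ζ (min (m - t₁) (t₂ - m))
    have he2 := (min_le_right ζ (min (m - t₁) (t₂ - m))).trans (min_le_left (m - t₁) (t₂ - m))
    have he3 := (min_le_right ζ (min (m - t₁) (t₂ - m))).trans (min_le_right (m - t₁) (t₂ - m))
    have he0 : 0 < e := lt_min hζ0 (lt_min (by linarith) (by linarith))
    have hp₂ : |h (m - e / 2) - h m| ≤ ε / 2 := by
      have := hdζ (m - e / 2) (by rw [Real.dist_eq, show m - e / 2 - m = -(e/2) by ring, abs_neg,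
        abs_of_pos (by linarith)]; linarith)
      rw [Real.dist_eq] at this; linarith
    have hp₁ : |h (m + e / 2) - h m| ≤ ε / 2 := by
      have := hdζ (m + e / 2) (by rw [Real.dist_eq, show m + e / 2 - m = e/2 by ring,
        abs_of_pos (by linarith)]; linarith)
      rw [Real.dist_eq] at this; linarith
    refine ⟨m - e / 2, m + e / 2, by linarith, by linarith, by linarith, ?_, ?_⟩
    · have h1 := abs_le.mp hp₁
      have h2 := abs_le.mp E₁
      rw [abs_le]; constructor <;> linarith
    · have h1 := abs_le.mp hp₂
      have h2 := abs_le.mp E₂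
      rw [abs_le]; constructor <;> linarith
  · exact ⟨m₂, m₁, lt_of_lt_of_le ht₁u₁ hm₂, hm₂₁', lt_of_le_of_lt hm₁ hu₂t₂,
      E₁.trans (by linarith), E₂.trans (by linarith)⟩
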